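/- Let F be an order-preserving and additively homogeneous self-map of Tⁿ, let z ∈ ℝⁿ and r ∈ ℝ, r ≥ 0, and assume r ≤ min_i ( F(z)_i − z_i ) (in particular every entry of F(z) is finite). Then every x ∈ ℝⁿ with ‖x − z‖_H ≤ r satisfies x ≤ F(x) in Tⁿ; that is, the Hilbert ball B_H(z, r) is contained in S(F) := { x ∈ Tⁿ : x ≤ F(x) }. -/

import Mathlib

noncomputable section

variable {n : ℕ}

/-- The canonical embedding of `ℝⁿ` into `Tⁿ`. -/
def toT (x : Fin n → ℝ) : Fin n → WithBot ℝ := fun i => (x i : WithBot ℝ)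

/-- `F` is order-preserving. -/
def OrdPres (F : (Fin n → WithBot ℝ) → (Fin n → WithBot ℝ)) : Prop :=
  ∀ x y, x ≤ y → F x ≤ F y

/-- `F` is additively homogeneous. -/
def AddHomog (F : (Fin n → WithBot ℝ) → (Fin n → WithBot ℝ)) : Prop :=
  ∀ (c : ℝ) (x : Fin n → WithBot ℝ),
    F (fun i => (c : WithBot ℝ) + x i) = fun i => (c : WithBot ℝ) + F x i

/-- Hilbert's seminorm `‖x‖_H = max_i x_i - min_i x_i` on `ℝⁿ`. -/
def hnorm (x : Fin n → ℝ) : ℝ := (⨆ i, x i) - (⨅ i, x i)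

/-- If `r ≤ min_i (F(z)_i - z_i)` then the Hilbert ball `B_H(z, r)` is contained in
`S(F) = { x : x ≤ F(x) }`. -/
theorem stmt6 (F : (Fin n → WithBot ℝ) → (Fin n → WithBot ℝ))
    (hmono : OrdPres F) (hhom : AddHomog F)
    (z : Fin n → ℝ) (r : ℝ) (hr : 0 ≤ r)
    (hle : ∀ i, ((r + z i : ℝ) : WithBot ℝ) ≤ F (toT z) i) :
    ∀ x : Fin n → ℝ, hnorm (x - z) ≤ r → toT x ≤ F (toT x) := by
  intro x hx i
  haveI : Nonempty (Fin n) := ⟨i⟩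
  set m := ⨅ j, (x j - z j) with hmdef
  have hm : ∀ j, m ≤ x j - z j := fun j =>
    ciInf_le (Set.Finite.bddBelow (Set.finite_range _)) j
  have hM : ∀ j, x j - z j ≤ (⨆ j, (x j - z j)) := fun j =>
    le_ciSup (Set.Finite.bddAbove (Set.finite_range (fun j => x j - z j))) j
  have h2 : (⨆ j, (x j - z j)) - m ≤ r := by
    simpa [hnorm, Pi.sub_apply] using hx
  have hxm : x i ≤ m + (r + z i) := by have := hM i; linarith
  have hzx : (fun j => (m : WithBot ℝ) + toT z j) ≤ toT x := by
    intro j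
    have h : m + z j ≤ x j := by have := hm j; linarith
    simpa [toT, ← WithBot.coe_add] using (WithBot.coe_le_coe.mpr h)
  calc toT x i ≤ ((m : WithBot ℝ) + ((r + z i : ℝ) : WithBot ℝ)) := by
        rw [← WithBot.coe_add]; exact WithBot.coe_le_coe.mpr hxm
    _ ≤ (m : WithBot ℝ) + F (toT z) i := add_le_add le_rfl (hle i)
    _ = F (fun j => (m : WithBot ℝ) + toT z j) i := by rw [hhom m (toT z)]
    _ ≤ F (toT x) i := hmono _ _ hzx i
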